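/- Thermo-majorization is equivalent to majorization of the blown-up eigenvalue vectors: let β > 0, E : Fin n → ℝ, and suppose M > 0 is such that d_i := M·exp(−β E_i) is a positive integer for every i. For probability distributions p, q on Fin n, let u be the vector of length Σ_i d_i whose entries are p_i/d_i each repeated d_i times, and let v be the corresponding vector built from q. Then u majorizes v (for every k, the sum of the k largest entries of u is at least the sum of the k largest entries of v) if and only if p thermo-majorizes q, i.e. f_p(x) ≥ f_q(x) for all x ∈ [0, Z]. -/

import Mathlib

open Finset

/-- A probability distribution on a finite type. -/
def IsProbDist {ι : Type*} [Fintype ι] (p : ι → ℝ) : Prop :=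
  (∀ i, 0 ≤ p i) ∧ ∑ i, p i = 1

/-- A (column-)stochastic matrix: nonnegative entries, each column sums to 1.
It acts on probability vectors by `(G.mulVec p) j = ∑ i, G j i * p i`. -/
def IsStochastic {ι : Type*} [Fintype ι] (G : Matrix ι ι ℝ) : Prop :=
  (∀ i j, 0 ≤ G i j) ∧ ∀ j, ∑ i, G i j = 1

/-- The partition function `Z = ∑ i, exp (-β E i)`. -/
noncomputable def partZ {ι : Type*} [Fintype ι] (β : ℝ) (E : ι → ℝ) : ℝ :=
  ∑ i, Real.exp (-(β * E i))

/-- The Gibbs distribution `τ i = exp (-β E i) / Z`. -/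
noncomputable def gibbs {ι : Type*} [Fintype ι] (β : ℝ) (E : ι → ℝ) : ι → ℝ :=
  fun i => Real.exp (-(β * E i)) / partZ β E

/-- `π` is a β-ordering of `p`: `k ↦ p (π k) * exp (β * E (π k))` is non-increasing. -/
def IsBetaOrdering {n : ℕ} (β : ℝ) (E : Fin n → ℝ) (p : Fin n → ℝ)
    (π : Equiv.Perm (Fin n)) : Prop :=
  ∀ k l : Fin n, k ≤ l →
    p (π l) * Real.exp (β * E (π l)) ≤ p (π k) * Real.exp (β * E (π k))

/-- The x-coordinate `∑_{i<k} exp (-β E (π i))` of the k-th elbow point. -/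
noncomputable def elbowX {n : ℕ} (β : ℝ) (E : Fin n → ℝ) (π : Equiv.Perm (Fin n))
    (k : ℕ) : ℝ :=
  ∑ i : Fin n, if (i : ℕ) < k then Real.exp (-(β * E (π i))) else 0

/-- The piecewise-linear thermo-majorization curve joining the points
`(∑_{i<k} exp (-β E (π i)), ∑_{i<k} p (π i))` for `k = 0, …, n`, where `π` is a
β-ordering of `p`.  On each segment the slope is `p (π k) * exp (β * E (π k))`. -/
noncomputable def tmCurve {n : ℕ} (β : ℝ) (E : Fin n → ℝ) (p : Fin n → ℝ)
    (π : Equiv.Perm (Fin n)) (x : ℝ) : ℝ :=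
  ∑ k : Fin n, p (π k) * Real.exp (β * E (π k)) *
    max 0 (min x (elbowX β E π ((k : ℕ) + 1)) - elbowX β E π (k : ℕ))

/-- `p` thermo-majorizes `q`: `f_p(x) ≥ f_q(x)` for all `x ∈ [0, Z]`
(for β-orderings of `p` and `q`). -/
def ThermoMajorizes {n : ℕ} (β : ℝ) (E : Fin n → ℝ) (p q : Fin n → ℝ) : Prop :=
  ∀ π σ : Equiv.Perm (Fin n), IsBetaOrdering β E p π → IsBetaOrdering β E q σ →
    ∀ x ∈ Set.Icc (0 : ℝ) (partZ β E), tmCurve β E q σ x ≤ tmCurve β E p π x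

/-- The sum of the `k` largest entries of `u`: the supremum of `∑ i ∈ A, u i` over
subsets `A` of cardinality `k`. -/
noncomputable def topSum {ι : Type*} [Fintype ι] (u : ι → ℝ) (k : ℕ) : ℝ :=
  sSup ((fun A : Finset ι => ∑ i ∈ A, u i) '' {A : Finset ι | A.card = k})

/-- `u` majorizes `v`: for every `k`, the sum of the `k` largest entries of `u` is at
least the sum of the `k` largest entries of `v`. -/
def Majorizes {ι : Type*} [Fintype ι] (u v : ι → ℝ) : Prop :=
  ∀ k : ℕ, topSum v k ≤ topSum u k


private lemma abel_sum (w x : ℕ → ℝ) (n : ℕ) :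
    ∑ j ∈ Finset.range n, w j * x j
      = ∑ j ∈ Finset.range n, (w j - w (j+1)) * (∑ i ∈ Finset.range (j+1), x i)
        + w n * ∑ i ∈ Finset.range n, x i := by
  induction n with
  | zero => simp
  | succ n ih =>
    rw [Finset.sum_range_succ, ih, Finset.sum_range_succ _ n,
      Finset.sum_range_succ x n]
    ring

private lemma sum_mul_nonneg (n : ℕ) (w x : ℕ → ℝ)
    (hmono : ∀ j, j + 1 < n → w (j+1) ≤ w j)
    (hpos : ∀ j, j < n → 0 ≤ w j)
    (hS : ∀ j, j ≤ n → 0 ≤ ∑ i ∈ Finset.range j, x i)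
    (hSn : ∑ i ∈ Finset.range n, x i = 0) :
    0 ≤ ∑ j ∈ Finset.range n, w j * x j := by
  have hrw : ∑ j ∈ Finset.range n, w j * x j
      = ∑ j ∈ Finset.range n, (fun m => if m < n then w m else 0) j * x j := by
    refine Finset.sum_congr rfl fun j hj => ?_
    simp [Finset.mem_range.mp hj]
  rw [hrw, abel_sum]
  simp only [lt_irrefl, if_false, zero_mul, add_zero]
  refine Finset.sum_nonneg fun j hj => mul_nonneg ?_ (hS (j+1) (Finset.mem_range.mp hj))
  have hjn := Finset.mem_range.mp hj
  by_cases h : j + 1 < n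
  · simp only [if_pos hjn, if_pos h]
    linarith [hmono j h]
  · simp only [if_pos hjn, if_neg h]
    linarith [hpos j hjn]

private lemma greedy_partial (δ : ℕ → ℕ) (k : ℕ) (j : ℕ) :
    ∑ i ∈ Finset.range j, min (δ i) (k - ∑ t ∈ Finset.range i, δ t)
      = min (∑ i ∈ Finset.range j, δ i) k := by
  induction j with
  | zero => simp
  | succ j ih => rw [Finset.sum_range_succ, ih, Finset.sum_range_succ]; omega

private lemma sum_if_lt {M : Type*} [AddCommMonoid M] (f : ℕ → M) (k n : ℕ) :
    ∑ j ∈ Finset.range n, (if j < k then f j else 0) = ∑ j ∈ Finset.range (min k n), f j := by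
  induction n with
  | zero => simp
  | succ n ih =>
    rw [Finset.sum_range_succ, ih]
    by_cases h : n < k
    · rw [if_pos h]
      have h1 : min k (n+1) = n + 1 := by omega
      have h2 : min k n = n := by omega
      rw [h1, h2, Finset.sum_range_succ]
    · rw [if_neg h]
      have h1 : min k (n+1) = min k n := by omega
      rw [h1, add_zero]

private lemma cast_min_sub (δ D k : ℕ) :
    ((min δ (k - D) : ℕ) : ℝ) = max 0 (min (k : ℝ) ((D : ℝ) + (δ : ℝ)) - (D : ℝ)) := by
  rcases le_total k D with h | h
  · have h1 : min δ (k - D) = 0 := by omega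
    have h2 : min (k:ℝ) ((D:ℝ) + δ) - D ≤ 0 := by
      have hk : (k:ℝ) ≤ D := by exact_mod_cast h
      have := min_le_left (k:ℝ) ((D:ℝ)+δ); linarith
    rw [h1, max_eq_left h2]; simp
  · rcases le_total k (D + δ) with h' | h'
    · have h1 : min δ (k - D) = k - D := by omega
      have hk : (min (k:ℝ) ((D:ℝ)+δ)) = k := by
        rw [min_eq_left]; exact_mod_cast h'
      have hc : (k:ℝ) - D ≥ 0 := by
        have : (D:ℝ) ≤ k := by exact_mod_cast h
        linarith
      rw [h1, hk, max_eq_right hc, Nat.cast_sub h]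
    · have h1 : min δ (k - D) = δ := by omega
      have hk : (min (k:ℝ) ((D:ℝ)+δ)) = (D:ℝ) + δ := by
        rw [min_eq_right]; exact_mod_cast h'
      have he : (D:ℝ) + δ - D = δ := by ring
      rw [h1, hk, he, max_eq_right (Nat.cast_nonneg δ)]

private lemma clamp_interp (a b x e e' : ℝ) (hab : a < b) (hee : e ≤ e')
    (h1 : e ≤ a ∨ b ≤ e) (h2 : e' ≤ a ∨ b ≤ e') (hxa : a ≤ x) (hxb : x ≤ b) :
    (b - a) * max 0 (min x e' - e)
      = (b - x) * max 0 (min a e' - e) + (x - a) * max 0 (min b e' - e) := by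
  rcases h2 with h2 | h2
  · rw [min_eq_right (le_trans h2 hxa), min_eq_right h2, min_eq_right (h2.trans hab.le)]; ring
  · rcases h1 with h1 | h1
    · rw [min_eq_left (hxb.trans h2), min_eq_left (hab.le.trans h2), min_eq_left h2,
        max_eq_right (by linarith), max_eq_right (by linarith), max_eq_right (by linarith)]
      ring
    · rw [min_eq_left (hxb.trans h2), min_eq_left (hab.le.trans h2), min_eq_left h2,
        max_eq_left (by linarith), max_eq_left (by linarith), max_eq_left (by linarith)]
      ring

private lemma card_filter_fin_lt (D m : ℕ) :
    ((Finset.univ : Finset (Fin D)).filter (fun t : Fin D => (t:ℕ) < m)).card = min D m := by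
  have h0 : ((Finset.univ : Finset (Fin D)).filter (fun t : Fin D => (t:ℕ) < m)).card
      = ∑ t : Fin D, if (t:ℕ) < m then 1 else 0 := Finset.card_filter _ _
  rw [h0, Fin.sum_univ_eq_sum_range (fun j => if j < m then (1:ℕ) else 0) D,
    sum_if_lt (fun _ => (1:ℕ)) m D]
  simp [min_comm]

/-- blown-up multiplicities, permuted, as a function on ℕ -/
def dseq {n : ℕ} (d : Fin n → ℕ) (π : Equiv.Perm (Fin n)) : ℕ → ℕ :=
  fun j => if h : j < n then d (π ⟨j, h⟩) else 0

/-- permuted probabilities as a function on ℕ -/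
noncomputable def pseq {n : ℕ} (p : Fin n → ℝ) (π : Equiv.Perm (Fin n)) : ℕ → ℝ :=
  fun j => if h : j < n then p (π ⟨j, h⟩) else 0

/-- value of the curve at grid point k/M -/
noncomputable def gridVal {n : ℕ} (d : Fin n → ℕ) (p : Fin n → ℝ)
    (π : Equiv.Perm (Fin n)) (k : ℕ) : ℝ :=
  ∑ j ∈ Finset.range n, pseq p π j / (dseq d π j : ℝ) *
    ((min (dseq d π j) (k - ∑ i ∈ Finset.range j, dseq d π i) : ℕ) : ℝ)

section mainAux
variable {n : ℕ} (β : ℝ) (E : Fin n → ℝ) (M : ℝ) (hM : 0 < M)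
  (d : Fin n → ℕ) (hdpos : ∀ i, 0 < d i)
  (hdM : ∀ i, (d i : ℝ) = M * Real.exp (-(β * E i)))

include hM hdM in
private lemma exp_neg_eq : ∀ i, Real.exp (-(β * E i)) = (d i : ℝ) / M := by
  intro i; rw [hdM i]; field_simp

include hM hdpos hdM in
private lemma exp_pos_eq : ∀ i, Real.exp (β * E i) = M / (d i : ℝ) := by
  intro i
  have h1 : Real.exp (β * E i) = (Real.exp (-(β * E i)))⁻¹ := by
    rw [← Real.exp_neg]; ring_nf
  rw [h1, exp_neg_eq β E M hM d hdM i, inv_div]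

include hM hdM in
private lemma elbow_eq (π : Equiv.Perm (Fin n)) (m : ℕ) :
    elbowX β E π m = ((∑ i ∈ Finset.range (min m n), dseq d π i : ℕ) : ℝ) / M := by
  unfold elbowX
  have h1 : ∀ i : Fin n, (if (i : ℕ) < m then Real.exp (-(β * E (π i))) else 0)
      = (fun j => if j < m then ((dseq d π j : ℕ) : ℝ) / M else 0) (i : ℕ) := by
    intro i
    simp only [dseq, i.2, dif_pos, Fin.eta]
    rw [exp_neg_eq β E M hM d hdM]
  rw [Finset.sum_congr rfl fun i _ => h1 i,
    Fin.sum_univ_eq_sum_range (fun j => if j < m then ((dseq d π j : ℕ) : ℝ) / M else 0) n,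
    sum_if_lt (fun j => ((dseq d π j : ℕ) : ℝ) / M) m n, ← Finset.sum_div, Nat.cast_sum]

include hM hdpos hdM in
private lemma tmCurve_grid (p : Fin n → ℝ) (π : Equiv.Perm (Fin n)) (k : ℕ) :
    tmCurve β E p π ((k : ℝ) / M) = gridVal d p π k := by
  unfold tmCurve gridVal
  have hterm : ∀ j : Fin n, p (π j) * Real.exp (β * E (π j)) *
      max 0 (min ((k : ℝ)/M) (elbowX β E π ((j : ℕ) + 1)) - elbowX β E π (j : ℕ))
      = (fun m => pseq p π m / (dseq d π m : ℝ) *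
          ((min (dseq d π m) (k - ∑ i ∈ Finset.range m, dseq d π i) : ℕ) : ℝ)) (j : ℕ) := by
    intro j
    have hj : (j : ℕ) < n := j.2
    have hδ : dseq d π (j : ℕ) = d (π j) := by simp [dseq, hj]
    have hP : pseq p π (j : ℕ) = p (π j) := by simp [pseq, hj]
    have hmin1 : min ((j : ℕ) + 1) n = (j : ℕ) + 1 := by omega
    have hmin2 : min (j : ℕ) n = (j : ℕ) := by omega
    rw [elbow_eq β E M hM d hdM π ((j:ℕ)+1), elbow_eq β E M hM d hdM π (j:ℕ), hmin1, hmin2,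
      Finset.sum_range_succ]
    set D := ∑ i ∈ Finset.range (j : ℕ), dseq d π i with hD
    simp only [hδ, hP]
    rw [exp_pos_eq β E M hM d hdpos hdM]
    have hd0 : (0 : ℝ) < (d (π j) : ℝ) := by exact_mod_cast hdpos (π j)
    have hcast : ((min (d (π j)) (k - D) : ℕ) : ℝ)
        = max 0 (min (k : ℝ) ((D : ℝ) + (d (π j) : ℝ)) - (D : ℝ)) := cast_min_sub _ _ _
    rw [hcast]
    have h2 : min ((k:ℝ)/M) ((↑(D + d (π j)) : ℝ)/M) = min (k : ℝ) ((D : ℝ) + (d (π j) : ℝ)) / M := by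
      rw [min_div_div_right hM.le]; push_cast; ring_nf
    rw [h2, div_sub_div_same]
    have h3 : ∀ y : ℝ, (0 : ℝ) ⊔ (y / M) = (0 ⊔ y) / M := fun y => by
      rw [← max_div_div_right hM.le, zero_div]
    rw [h3]
    rw [eq_div_iff (ne_of_gt hM)] at *
    field_simp
  rw [Finset.sum_congr rfl fun j _ => hterm j]
  exact Fin.sum_univ_eq_sum_range (fun m => pseq p π m / (dseq d π m : ℝ) *
    ((min (dseq d π m) (k - ∑ i ∈ Finset.range m, dseq d π i) : ℕ) : ℝ)) n

private lemma dseq_total (π : Equiv.Perm (Fin n)) :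
    ∑ j ∈ Finset.range n, dseq d π j = ∑ i, d i := by
  rw [← Fin.sum_univ_eq_sum_range (dseq d π) n]
  rw [Finset.sum_congr rfl (fun i _ => by simp [dseq, i.2] : ∀ i : Fin n, i ∈ univ → dseq d π (i:ℕ) = d (π i))]
  exact Equiv.sum_comp π d

include hdpos in
private lemma gridVal_total (p : Fin n → ℝ) (π : Equiv.Perm (Fin n)) (k : ℕ)
    (hk : ∑ i, d i ≤ k) : gridVal d p π k = ∑ i, p i := by
  unfold gridVal
  have hterm : ∀ j ∈ Finset.range n, pseq p π j / (dseq d π j : ℝ) *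
      ((min (dseq d π j) (k - ∑ i ∈ Finset.range j, dseq d π i) : ℕ) : ℝ) = pseq p π j := by
    intro j hj
    have hjn := Finset.mem_range.mp hj
    have hle : (∑ i ∈ Finset.range j, dseq d π i) + dseq d π j ≤ k := by
      calc (∑ i ∈ Finset.range j, dseq d π i) + dseq d π j
          = ∑ i ∈ Finset.range (j+1), dseq d π i := (Finset.sum_range_succ _ _).symm
        _ ≤ ∑ i ∈ Finset.range n, dseq d π i :=
            Finset.sum_le_sum_of_subset (Finset.range_subset_range.mpr hjn)
        _ = ∑ i, d i := dseq_total d π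
        _ ≤ k := hk
    have hmin : min (dseq d π j) (k - ∑ i ∈ Finset.range j, dseq d π i) = dseq d π j := by omega
    rw [hmin]
    have hd0 : (dseq d π j : ℝ) ≠ 0 := by
      simp only [dseq, dif_pos hjn]
      exact_mod_cast (hdpos _).ne'
    field_simp
  rw [Finset.sum_congr rfl hterm, ← Fin.sum_univ_eq_sum_range (pseq p π) n,
    Finset.sum_congr rfl (fun i _ => by simp [pseq, i.2] : ∀ i : Fin n, i ∈ univ → pseq p π (i:ℕ) = p (π i))]
  exact Equiv.sum_comp π p

include hM hdpos hdM in
private lemma topSum_grid (p : Fin n → ℝ) (hp0 : ∀ i, 0 ≤ p i) (π : Equiv.Perm (Fin n))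
    (hπ : IsBetaOrdering β E p π) (k : ℕ) (hk : k ≤ ∑ i, d i) :
    topSum (fun x : Σ i : Fin n, Fin (d i) => p x.1 / (d x.1 : ℝ)) k = gridVal d p π k := by
  classical
  set u : (Σ i : Fin n, Fin (d i)) → ℝ := fun x => p x.1 / (d x.1 : ℝ) with hu
  set δ : ℕ → ℕ := dseq d π with hδdef
  set g : ℕ → ℕ := fun m => min (δ m) (k - ∑ i ∈ Finset.range m, δ i) with hgdef
  have hδeq : ∀ (m : ℕ) (hm : m < n), δ m = d (π ⟨m, hm⟩) := by
    intro m hm; simp [hδdef, dseq, hm]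
  have hPeq : ∀ (m : ℕ) (hm : m < n), pseq p π m = p (π ⟨m, hm⟩) := by
    intro m hm; simp [pseq, hm]
  have hδpos : ∀ m, m < n → 0 < δ m := fun m hm => by
    rw [hδeq m hm]; exact hdpos _
  have hgtot : ∑ m ∈ Finset.range n, g m = k := by
    rw [hgdef]
    rw [greedy_partial δ k n, dseq_total d π]
    omega
  -- w is sorted
  have wsorted : ∀ m, m + 1 < n → pseq p π (m+1) / (δ (m+1) : ℝ) ≤ pseq p π m / (δ m : ℝ) := by
    intro m hm
    have h1 := hπ ⟨m, by omega⟩ ⟨m+1, hm⟩ (by simp [Fin.mk_le_mk])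
    rw [exp_pos_eq β E M hM d hdpos hdM, exp_pos_eq β E M hM d hdpos hdM] at h1
    rw [hPeq (m+1) hm, hPeq m (by omega), hδeq (m+1) hm, hδeq m (by omega)]
    have h2 : ∀ i : Fin n, p (π i) * (M / (d (π i) : ℝ)) = M * (p (π i) / (d (π i) : ℝ)) := by
      intro i; ring
    rw [h2, h2] at h1
    exact le_of_mul_le_mul_left h1 hM
  have wpos : ∀ m, m < n → 0 ≤ pseq p π m / (δ m : ℝ) := by
    intro m hm
    rw [hPeq m hm]
    exact div_nonneg (hp0 _) (Nat.cast_nonneg _)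
  -- the greedy set
  set gI : Fin n → ℕ := fun i => min (d i) (k - ∑ t ∈ Finset.range ((π.symm i : Fin n) : ℕ), δ t)
    with hgI
  have hgIg : ∀ i : Fin n, gI i = g ((π.symm i : Fin n) : ℕ) := by
    intro i
    have h2 : δ ((π.symm i : Fin n) : ℕ) = d i := by
      rw [hδeq _ (π.symm i).2]
      simp
    simp only [hgI, hgdef, h2]
  have hgIπ : ∀ j : Fin n, gI (π j) = g (j : ℕ) := by
    intro j; rw [hgIg]; simp
  set Astar : Finset (Σ i : Fin n, Fin (d i)) :=
    Finset.univ.sigma (fun i => Finset.univ.filter (fun t : Fin (d i) => (t : ℕ) < gI i))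
    with hAstar
  have hfibcard : ∀ i : Fin n,
      (Finset.univ.filter (fun t : Fin (d i) => (t : ℕ) < gI i)).card = gI i := by
    intro i
    rw [card_filter_fin_lt]
    have : gI i ≤ d i := min_le_left _ _
    omega
  have hAcard : Astar.card = k := by
    rw [hAstar, Finset.card_sigma]
    rw [Finset.sum_congr rfl fun i _ => hfibcard i]
    rw [← Equiv.sum_comp π gI, Finset.sum_congr rfl fun j (_ : j ∈ univ) => hgIπ j]
    rw [Fin.sum_univ_eq_sum_range g n]
    exact hgtot
  have hAval : ∑ x ∈ Astar, u x = gridVal d p π k := by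
    rw [hAstar, Finset.sum_sigma]
    have h1 : ∀ i : Fin n, ∑ t ∈ Finset.univ.filter (fun t : Fin (d i) => (t : ℕ) < gI i),
        u ⟨i, t⟩ = (gI i : ℝ) * (p i / (d i : ℝ)) := by
      intro i
      have hc : ∀ t ∈ Finset.univ.filter (fun t : Fin (d i) => (t : ℕ) < gI i),
          u ⟨i, t⟩ = p i / (d i : ℝ) := fun t _ => rfl
      rw [Finset.sum_congr rfl hc, Finset.sum_const, hfibcard i, nsmul_eq_mul]
    rw [Finset.sum_congr rfl fun i _ => h1 i]
    rw [← Equiv.sum_comp π (fun i => (gI i : ℝ) * (p i / (d i : ℝ)))]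
    have h2 : ∀ j : Fin n, (gI (π j) : ℝ) * (p (π j) / (d (π j) : ℝ))
        = (fun m => pseq p π m / (δ m : ℝ) * (g m : ℝ)) (j : ℕ) := by
      intro j
      simp only [hgIπ j, hPeq (j : ℕ) j.2, hδeq (j : ℕ) j.2, Fin.eta]
      ring
    rw [Finset.sum_congr rfl fun j (_ : j ∈ univ) => h2 j]
    rw [Fin.sum_univ_eq_sum_range (fun m => pseq p π m / (δ m : ℝ) * (g m : ℝ)) n]
    unfold gridVal
    rfl
  -- upper bound
  have hub : ∀ A : Finset (Σ i : Fin n, Fin (d i)), A.card = k →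
      ∑ x ∈ A, u x ≤ gridVal d p π k := by
    intro A hA
    set a : Fin n → ℕ := fun i => (A.filter (fun x => x.1 = i)).card with ha
    have h1 : ∑ x ∈ A, u x = ∑ i, (p i / (d i : ℝ)) * (a i : ℝ) := by
      rw [← Finset.sum_fiberwise A (fun x => x.1) u]
      refine Finset.sum_congr rfl fun i _ => ?_
      have : ∀ x ∈ A.filter (fun x => x.1 = i), u x = p i / (d i : ℝ) := by
        intro x hx
        have hx1 : x.1 = i := (Finset.mem_filter.mp hx).2
        rw [hu]; simp only [hx1]
      rw [Finset.sum_congr rfl this, Finset.sum_const, nsmul_eq_mul, ha]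
      ring
    have h2 : ∑ i, a i = k := by
      rw [← hA]
      exact (Finset.card_eq_sum_card_fiberwise (fun x _ => Finset.mem_univ x.1)).symm
    have h3 : ∀ i, a i ≤ d i := by
      intro i
      have : a i ≤ (Finset.range (d i)).card := by
        apply Finset.card_le_card_of_injOn (fun x => (x.2 : ℕ))
        · intro x hx
          have hx1 : x.1 = i := (Finset.mem_filter.mp hx).2
          rw [Finset.mem_coe, Finset.mem_range]
          have := x.2.2
          exact lt_of_lt_of_eq this (congrArg d hx1)
        · intro x hx y hy hxy
          have hx1 : x.1 = i := (Finset.mem_filter.mp hx).2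
          have hy1 : y.1 = i := (Finset.mem_filter.mp hy).2
          rcases x with ⟨x1, x2⟩
          rcases y with ⟨y1, y2⟩
          dsimp at hx1 hy1 hxy
          subst hx1; subst hy1
          simp only [Sigma.mk.inj_iff, heq_eq_eq, true_and]
          exact Fin.ext hxy
      simpa using this
    set aseq : ℕ → ℕ := fun m => if h : m < n then a (π ⟨m, h⟩) else 0 with haseq
    have haseqle : ∀ m, m < n → aseq m ≤ δ m := by
      intro m hm
      simp only [haseq]
      rw [dif_pos hm, hδeq m hm]
      exact h3 _
    have haseqtot : ∑ m ∈ Finset.range n, aseq m = k := by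
      rw [← Fin.sum_univ_eq_sum_range aseq n]
      have : ∀ j : Fin n, aseq (j : ℕ) = a (π j) := by
        intro j; simp only [haseq]; rw [dif_pos j.2]
      rw [Finset.sum_congr rfl fun j (_ : j ∈ univ) => this j, Equiv.sum_comp π a]
      exact h2
    have h4 : ∑ i, (p i / (d i : ℝ)) * (a i : ℝ)
        = ∑ m ∈ Finset.range n, pseq p π m / (δ m : ℝ) * (aseq m : ℝ) := by
      rw [← Equiv.sum_comp π (fun i => (p i / (d i : ℝ)) * (a i : ℝ))]
      have : ∀ j : Fin n, (p (π j) / (d (π j) : ℝ)) * (a (π j) : ℝ)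
          = (fun m => pseq p π m / (δ m : ℝ) * (aseq m : ℝ)) (j : ℕ) := by
        intro j
        simp only [hPeq (j : ℕ) j.2, hδeq (j : ℕ) j.2, haseq, dif_pos j.2, Fin.eta]
      rw [Finset.sum_congr rfl fun j (_ : j ∈ univ) => this j]
      exact Fin.sum_univ_eq_sum_range (fun m => pseq p π m / (δ m : ℝ) * (aseq m : ℝ)) n
    rw [h1, h4]
    have key : 0 ≤ ∑ m ∈ Finset.range n, (pseq p π m / (δ m : ℝ)) * ((g m : ℝ) - (aseq m : ℝ)) := by
      apply sum_mul_nonneg n _ _ wsorted wpos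
      · intro j hj
        have hpart : ∑ i ∈ Finset.range j, aseq i ≤ ∑ i ∈ Finset.range j, g i := by
          rw [hgdef, greedy_partial δ k j]
          have hb1 : ∑ i ∈ Finset.range j, aseq i ≤ ∑ i ∈ Finset.range j, δ i :=
            Finset.sum_le_sum fun i hi => haseqle i (by
              have := Finset.mem_range.mp hi; omega)
          have hb2 : ∑ i ∈ Finset.range j, aseq i ≤ k := by
            calc ∑ i ∈ Finset.range j, aseq i ≤ ∑ i ∈ Finset.range n, aseq i :=
                Finset.sum_le_sum_of_subset (Finset.range_subset_range.mpr hj)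
              _ = k := haseqtot
          omega
        have : ((∑ i ∈ Finset.range j, aseq i : ℕ) : ℝ) ≤ ((∑ i ∈ Finset.range j, g i : ℕ) : ℝ) := by
          exact_mod_cast hpart
        push_cast at this ⊢
        rw [Finset.sum_sub_distrib]
        linarith
      · push_cast
        rw [Finset.sum_sub_distrib]
        have : ((∑ m ∈ Finset.range n, g m : ℕ) : ℝ) = ((∑ m ∈ Finset.range n, aseq m : ℕ) : ℝ) := by
          rw [hgtot, haseqtot]
        push_cast at this
        linarith
    have expand : ∑ m ∈ Finset.range n, (pseq p π m / (δ m : ℝ)) * ((g m : ℝ) - (aseq m : ℝ))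
        = gridVal d p π k - ∑ m ∈ Finset.range n, pseq p π m / (δ m : ℝ) * (aseq m : ℝ) := by
      unfold gridVal
      rw [← Finset.sum_sub_distrib]
      exact Finset.sum_congr rfl fun m _ => by ring
    rw [expand] at key
    linarith
  -- conclude
  unfold topSum
  apply IsGreatest.csSup_eq
  constructor
  · exact ⟨Astar, hAcard, hAval⟩
  · rintro y ⟨A, hA, rfl⟩
    exact hub A hA

private lemma topSum_empty (u : (Σ i : Fin n, Fin (d i)) → ℝ) (k : ℕ) (hk : ∑ i, d i < k) :
    topSum u k = 0 := by
  unfold topSum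
  have hempty : {A : Finset (Σ i : Fin n, Fin (d i)) | A.card = k} = ∅ := by
    ext A
    simp only [Set.mem_setOf_eq, Set.mem_empty_iff_false, iff_false]
    intro hA
    have h1 : A.card ≤ Fintype.card (Σ i : Fin n, Fin (d i)) := Finset.card_le_univ A
    rw [Fintype.card_sigma] at h1
    simp only [Fintype.card_fin] at h1
    omega
  rw [hempty, Set.image_empty, Real.sSup_empty]

end mainAux

private lemma tmCurve_interp {n : ℕ} (β : ℝ) (E : Fin n → ℝ) (M : ℝ) (hM : 0 < M)
    (d : Fin n → ℕ) (hdM : ∀ i, (d i : ℝ) = M * Real.exp (-(β * E i)))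
    (p : Fin n → ℝ) (π : Equiv.Perm (Fin n)) (m : ℕ) (x : ℝ)
    (hxa : (m : ℝ) / M ≤ x) (hxb : x ≤ ((m : ℝ) + 1) / M) :
    (((m : ℝ) + 1) / M - (m : ℝ) / M) * tmCurve β E p π x
      = ((((m : ℝ) + 1) / M) - x) * tmCurve β E p π ((m : ℝ) / M)
        + (x - (m : ℝ) / M) * tmCurve β E p π (((m : ℝ) + 1) / M) := by
  have hab : (m : ℝ) / M < ((m : ℝ) + 1) / M := by
    apply (div_lt_div_iff_of_pos_right hM).mpr
    linarith
  have hcast : ∀ a b : ℕ, a ≤ b → ((a : ℝ) / M ≤ (b : ℝ) / M) := by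
    intro a b h
    exact (div_le_div_iff_of_pos_right hM).mpr (by exact_mod_cast h)
  unfold tmCurve
  rw [Finset.mul_sum, Finset.mul_sum, Finset.mul_sum, ← Finset.sum_add_distrib]
  refine Finset.sum_congr rfl fun j _ => ?_
  set Dj : ℕ := ∑ i ∈ Finset.range (min (j : ℕ) n), dseq d π i with hDj
  set Dj' : ℕ := ∑ i ∈ Finset.range (min ((j : ℕ) + 1) n), dseq d π i with hDj'
  have he : elbowX β E π (j : ℕ) = (Dj : ℝ) / M := elbow_eq β E M hM d hdM π _
  have he' : elbowX β E π ((j : ℕ) + 1) = (Dj' : ℝ) / M := elbow_eq β E M hM d hdM π _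
  have hDle : Dj ≤ Dj' := by
    apply Finset.sum_le_sum_of_subset
    apply Finset.range_subset_range.mpr
    omega
  have hee : (Dj : ℝ) / M ≤ (Dj' : ℝ) / M := hcast _ _ hDle
  have hpos : ∀ a : ℕ, ((a : ℕ) : ℝ) / M ≤ (m : ℝ) / M ∨ ((m : ℝ) + 1) / M ≤ ((a : ℕ) : ℝ) / M := by
    intro a
    rcases le_or_gt a m with h | h
    · exact Or.inl (hcast a m h)
    · right
      have := hcast (m + 1) a h
      push_cast at this
      linarith
  rw [he, he']
  linear_combination (p (π j) * Real.exp (β * E (π j))) *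
    clamp_interp ((m : ℝ)/M) (((m : ℝ)+1)/M) x ((Dj : ℝ)/M) ((Dj' : ℝ)/M)
      hab hee (hpos Dj) (hpos Dj') hxa hxb



/-- Suppose `d i := M * exp (-β E i)` is a positive integer for every
`i`.  Let `u` (resp. `v`) be the vector of length `∑ i, d i` whose entries are
`p i / d i` (resp. `q i / d i`), each repeated `d i` times (modelled on the sigma type
`Σ i, Fin (d i)`).  Then `u` majorizes `v` iff `p` thermo-majorizes `q`. -/
theorem blowup_majorizes_iff_thermoMajorizes {n : ℕ} (β : ℝ) (hβ : 0 < β)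
    (E : Fin n → ℝ) (M : ℝ) (hM : 0 < M) (d : Fin n → ℕ) (hdpos : ∀ i, 0 < d i)
    (hdM : ∀ i, (d i : ℝ) = M * Real.exp (-(β * E i)))
    (p q : Fin n → ℝ) (hp : IsProbDist p) (hq : IsProbDist q) :
    Majorizes (fun x : Σ i : Fin n, Fin (d i) => p x.1 / (d x.1 : ℝ))
        (fun x : Σ i : Fin n, Fin (d i) => q x.1 / (d x.1 : ℝ)) ↔
      ThermoMajorizes β E p q := by
  classical
  set N : ℕ := ∑ i, d i with hN
  have hZ : partZ β E = (N : ℝ) / M := by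
    unfold partZ
    rw [Finset.sum_congr rfl fun i _ => exp_neg_eq β E M hM d hdM i, ← Finset.sum_div,
      hN, Nat.cast_sum]
  constructor
  · intro hmaj π σ hπ hσ x hx
    obtain ⟨hx0, hxZ⟩ := hx
    have hgrid : ∀ k : ℕ, tmCurve β E q σ ((k : ℝ) / M) ≤ tmCurve β E p π ((k : ℝ) / M) := by
      intro k
      rcases le_or_gt k N with hk | hk
      · rw [tmCurve_grid β E M hM d hdpos hdM q σ k, tmCurve_grid β E M hM d hdpos hdM p π k,
          ← topSum_grid β E M hM d hdpos hdM q hq.1 σ hσ k hk,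
          ← topSum_grid β E M hM d hdpos hdM p hp.1 π hπ k hk]
        exact hmaj k
      · rw [tmCurve_grid β E M hM d hdpos hdM q σ k, tmCurve_grid β E M hM d hdpos hdM p π k,
          gridVal_total d hdpos q σ k hk.le, gridVal_total d hdpos p π k hk.le, hp.2, hq.2]
    set m : ℕ := ⌊M * x⌋₊ with hm
    have hxa : (m : ℝ) / M ≤ x := by
      rw [div_le_iff₀ hM]
      have := Nat.floor_le (mul_nonneg hM.le hx0)
      rw [← hm] at this
      linarith
    have hxb : x ≤ ((m : ℝ) + 1) / M := by
      rw [le_div_iff₀ hM]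
      have := Nat.lt_floor_add_one (M * x)
      rw [← hm] at this
      linarith
    have h1 := tmCurve_interp β E M hM d hdM q σ m x hxa hxb
    have h2 := tmCurve_interp β E M hM d hdM p π m x hxa hxb
    have c1 := hgrid m
    have c2 := hgrid (m + 1)
    push_cast at c2
    have hstep : ((m : ℝ) + 1) / M - (m : ℝ) / M = 1 / M := by field_simp; ring
    have hba : (0:ℝ) < ((m : ℝ) + 1) / M - (m : ℝ) / M := by
      rw [hstep]; positivity
    have key : (((m : ℝ) + 1) / M - (m : ℝ) / M) * tmCurve β E q σ x
        ≤ (((m : ℝ) + 1) / M - (m : ℝ) / M) * tmCurve β E p π x := by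
      rw [h1, h2]
      have w1 : (0:ℝ) ≤ ((m : ℝ) + 1) / M - x := by linarith
      have w2 : (0:ℝ) ≤ x - (m : ℝ) / M := by linarith
      have t1 := mul_le_mul_of_nonneg_left c1 w1
      have t2 := mul_le_mul_of_nonneg_left c2 w2
      linarith
    exact le_of_mul_le_mul_left key hba
  · intro hTM k
    set πp : Equiv.Perm (Fin n) := Tuple.sort (fun i => -(p i * Real.exp (β * E i))) with hπp
    set σq : Equiv.Perm (Fin n) := Tuple.sort (fun i => -(q i * Real.exp (β * E i))) with hσq
    have hπ : IsBetaOrdering β E p πp := by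
      intro a b hab
      have := Tuple.monotone_sort (fun i => -(p i * Real.exp (β * E i))) hab
      simp only [Function.comp_apply] at this
      rw [← hπp] at this
      linarith
    have hσ : IsBetaOrdering β E q σq := by
      intro a b hab
      have := Tuple.monotone_sort (fun i => -(q i * Real.exp (β * E i))) hab
      simp only [Function.comp_apply] at this
      rw [← hσq] at this
      linarith
    rcases le_or_gt k N with hk | hk
    · rw [topSum_grid β E M hM d hdpos hdM q hq.1 σq hσ k hk,
        topSum_grid β E M hM d hdpos hdM p hp.1 πp hπ k hk,
        ← tmCurve_grid β E M hM d hdpos hdM q σq k,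
        ← tmCurve_grid β E M hM d hdpos hdM p πp k]
      apply hTM πp σq hπ hσ
      constructor
      · positivity
      · rw [hZ]
        exact (div_le_div_iff_of_pos_right hM).mpr (by exact_mod_cast hk)
    · rw [topSum_empty d (fun x => q x.1 / (d x.1 : ℝ)) k hk,
        topSum_empty d (fun x => p x.1 / (d x.1 : ℝ)) k hk]
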